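/- For every integer n ≥ 2, the sum over all set partitions π of {1,...,n} of (|π|-1)! equals 2·Bell_ord(n-1), where Bell_ord(m) = Σ_{k=0}^m S(m,k)·k! is the m-th ordered Bell (Fubini) number and S(m,k) denotes Stirling numbers of the second kind. Equivalently, Σ_{k=1}^n S(n,k)·(k-1)! = 2·Σ_{k=0}^{n-1} S(n-1,k)·k!. -/

import Mathlib

open Finset

/-- Stirling numbers of the second kind. -/
def stirling2 : ℕ → ℕ → ℕ
  | 0, 0 => 1
  | 0, _ + 1 => 0
  | _ + 1, 0 => 0
  | n + 1, k + 1 => stirling2 n k + (k + 1) * stirling2 n (k + 1)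

/-- Ordered Bell (Fubini) numbers. -/
def ordBell (m : ℕ) : ℕ := ∑ k ∈ Finset.range (m + 1), stirling2 m k * k.factorial

section Bij

variable {α : Type*} [DecidableEq α] {t : Finset α} {a : α}

/-- Add `a` to the finpartition, inside block `b` (where `b = ∅` means: as a new singleton). -/
def addTo (π : Finpartition t) (b : Finset α) (ha : a ∉ t)
    (hdis : ∀ c ∈ π.parts.erase b, Disjoint b c)
    (hsup : b ∪ (π.parts.erase b).sup id = t) : Finpartition (insert a t) where
  parts := insert (insert a b) (π.parts.erase b)
  supIndep := by
    rw [Finset.supIndep_iff_pairwiseDisjoint, coe_insert]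
    refine Set.PairwiseDisjoint.insert ?_ ?_
    · exact (π.supIndep.subset (erase_subset _ _)).pairwiseDisjoint
    · intro c hc _
      simp only [mem_coe] at hc
      have hct : c ⊆ t := π.le (mem_of_mem_erase hc)
      simp only [id]
      rw [Finset.disjoint_insert_left]
      exact ⟨fun h => ha (hct h), hdis c hc⟩
  sup_parts := by
    rw [sup_insert, id, Finset.sup_eq_union, Finset.insert_union, hsup]
  bot_notMem := by
    rw [Finset.bot_eq_empty, mem_insert]
    push_neg
    exact ⟨Ne.symm (Finset.insert_ne_empty a b),
      fun h => π.bot_notMem (mem_of_mem_erase h)⟩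

lemma addTo_parts (π : Finpartition t) (b : Finset α) (ha : a ∉ t) (h1) (h2) :
    (addTo π b ha h1 h2).parts = insert (insert a b) (π.parts.erase b) := rfl

lemma not_empty_mem (π : Finpartition t) : (∅ : Finset α) ∉ π.parts := by
  simpa using π.not_bot_mem

lemma not_mem_parts_of_mem {π : Finpartition t} {c : Finset α} (ha : a ∉ t) (hc : c ∈ π.parts) :
    a ∉ c := fun h => ha (π.le hc h)

/-- Add `a` as a new singleton block. -/
def addS (π : Finpartition t) (ha : a ∉ t) : Finpartition (insert a t) :=
  addTo π ∅ ha (fun _ _ => disjoint_empty_left _)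
    (by rw [Finset.erase_eq_of_notMem (by simpa using π.not_bot_mem), π.sup_parts,
      Finset.empty_union])

lemma addS_parts (π : Finpartition t) (ha : a ∉ t) :
    (addS π ha).parts = insert {a} π.parts := by
  rw [addS, addTo_parts, Finset.erase_eq_of_notMem (by simpa using π.not_bot_mem)]
  rfl

/-- Add `a` to an existing block `b`. -/
def addB (π : Finpartition t) (b : Finset α) (hb : b ∈ π.parts) (ha : a ∉ t) :
    Finpartition (insert a t) :=
  addTo π b ha
    (fun c hc => π.disjoint hb (mem_of_mem_erase hc) (ne_of_mem_erase hc).symm)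
    (by
      conv_rhs => rw [← π.sup_parts, ← Finset.insert_erase hb]
      rw [sup_insert, Finset.sup_eq_union]; rfl)

lemma addB_parts (π : Finpartition t) (b : Finset α) (hb : b ∈ π.parts) (ha : a ∉ t) :
    (addB π b hb ha).parts = insert (insert a b) (π.parts.erase b) := rfl

lemma card_addS (π : Finpartition t) (ha : a ∉ t) :
    (addS π ha).parts.card = π.parts.card + 1 := by
  rw [addS_parts, card_insert_of_notMem]
  intro h
  exact not_mem_parts_of_mem ha h (mem_singleton_self a)

lemma card_addB (π : Finpartition t) (b : Finset α) (hb : b ∈ π.parts) (ha : a ∉ t) :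
    (addB π b hb ha).parts.card = π.parts.card := by
  rw [addB_parts, card_insert_of_notMem, card_erase_of_mem hb]
  · have : 1 ≤ π.parts.card := card_pos.2 ⟨b, hb⟩
    omega
  · intro h
    exact not_mem_parts_of_mem ha (mem_of_mem_erase h) (mem_insert_self a b)

/-- Restrict a partition of `insert a t` to `t`. -/
def restr (ha : a ∉ t) (P : Finpartition (insert a t)) : Finpartition t :=
  (P.avoid {a}).copy (by ext x; simp [Finset.mem_sdiff]; aesop)

lemma mem_restr_iff (ha : a ∉ t) (P : Finpartition (insert a t)) {c : Finset α} :
    c ∈ (restr ha P).parts ↔ ∃ d ∈ P.parts, ¬d ⊆ {a} ∧ d.erase a = c := by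
  simp only [restr, Finpartition.copy, Finpartition.mem_avoid, le_eq_subset,
    Finset.sdiff_singleton_eq_erase]

lemma part_a_mem (ha : a ∉ t) (P : Finpartition (insert a t)) : P.part a ∈ P.parts :=
  P.part_mem.2 (mem_insert_self a t)

lemma a_mem_part (ha : a ∉ t) (P : Finpartition (insert a t)) : a ∈ P.part a :=
  P.mem_part (mem_insert_self a t)

lemma restr_parts_of_eq (ha : a ∉ t) (P : Finpartition (insert a t))
    (h : P.part a = {a}) : (restr ha P).parts = P.parts.erase {a} := by
  ext c
  rw [mem_restr_iff]
  constructor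
  · rintro ⟨d, hd, hd1, rfl⟩
    have had : a ∉ d := fun had =>
      hd1 (by rw [← P.part_eq_of_mem hd had, h])
    rw [Finset.erase_eq_of_notMem had]
    refine mem_erase.2 ⟨?_, hd⟩
    rintro rfl
    exact hd1 subset_rfl
  · intro hc
    have hcp := mem_of_mem_erase hc
    have hca : a ∉ c := by
      intro hca
      exact ne_of_mem_erase hc (by rw [← P.part_eq_of_mem hcp hca, h])
    refine ⟨c, hcp, ?_, Finset.erase_eq_of_notMem hca⟩
    intro hsub
    rcases Finset.subset_singleton_iff.1 hsub with rfl | rfl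
    · exact not_empty_mem P hcp
    · exact ne_of_mem_erase hc rfl

lemma restr_parts_of_ne (ha : a ∉ t) (P : Finpartition (insert a t))
    (h : P.part a ≠ {a}) :
    (restr ha P).parts = insert ((P.part a).erase a) (P.parts.erase (P.part a)) := by
  have hTmem := part_a_mem ha P
  have haT := a_mem_part ha P
  have hTsub : ¬P.part a ⊆ {a} := by
    intro hsub
    rcases Finset.subset_singleton_iff.1 hsub with h' | h'
    · exact not_empty_mem P (h' ▸ hTmem)
    · exact h h'
  ext c
  rw [mem_restr_iff]
  constructor
  · rintro ⟨d, hd, hd1, rfl⟩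
    by_cases had : a ∈ d
    · rw [P.part_eq_of_mem hd had]
      exact mem_insert_self _ _
    · rw [Finset.erase_eq_of_notMem had]
      refine mem_insert_of_mem (mem_erase.2 ⟨?_, hd⟩)
      rintro rfl
      exact had haT
  · intro hc
    rcases mem_insert.1 hc with rfl | hc'
    · exact ⟨P.part a, hTmem, hTsub, rfl⟩
    · have hcp := mem_of_mem_erase hc'
      have hca : a ∉ c := fun hca => ne_of_mem_erase hc' (P.eq_of_mem_parts hcp hTmem hca haT)
      refine ⟨c, hcp, ?_, Finset.erase_eq_of_notMem hca⟩
      intro hsub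
      rcases Finset.subset_singleton_iff.1 hsub with rfl | rfl
      · exact not_empty_mem P hcp
      · exact hca (mem_singleton_self a)

lemma part_addS (π : Finpartition t) (ha : a ∉ t) : (addS π ha).part a = {a} :=
  Finpartition.part_eq_of_mem _ (by rw [addS_parts]; exact mem_insert_self _ _)
    (mem_singleton_self a)

lemma part_addB (π : Finpartition t) (b : Finset α) (hb : b ∈ π.parts) (ha : a ∉ t) :
    (addB π b hb ha).part a = insert a b :=
  Finpartition.part_eq_of_mem _ (by rw [addB_parts]; exact mem_insert_self _ _)
    (mem_insert_self a b)

lemma restr_addS (π : Finpartition t) (ha : a ∉ t) : restr ha (addS π ha) = π := by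
  ext1
  rw [restr_parts_of_eq ha _ (part_addS π ha), addS_parts, Finset.erase_insert]
  intro h
  exact not_mem_parts_of_mem ha h (mem_singleton_self a)

lemma restr_addB (π : Finpartition t) (b : Finset α) (hb : b ∈ π.parts) (ha : a ∉ t) :
    restr ha (addB π b hb ha) = π := by
  have hab : a ∉ b := fun h => ha (π.le hb h)
  have hbne : b.Nonempty := π.nonempty_of_mem_parts hb
  have hne : (addB π b hb ha).part a ≠ {a} := by
    rw [part_addB]
    intro h
    obtain ⟨x, hx⟩ := hbne
    have : x ∈ ({a} : Finset α) := h ▸ mem_insert_of_mem hx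
    rw [mem_singleton] at this
    exact hab (this ▸ hx)
  ext1
  rw [restr_parts_of_ne ha _ hne, part_addB, Finset.erase_insert hab, addB_parts,
    Finset.erase_insert, Finset.insert_erase hb]
  intro h
  exact not_mem_parts_of_mem ha (mem_of_mem_erase h) (mem_insert_self a b)

lemma eq_addS (ha : a ∉ t) (P : Finpartition (insert a t)) (h : P.part a = {a}) :
    P = addS (restr ha P) ha := by
  ext1
  rw [addS_parts, restr_parts_of_eq ha P h, ← h, Finset.insert_erase (part_a_mem ha P)]

lemma erase_part_mem_restr (ha : a ∉ t) (P : Finpartition (insert a t))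
    (h : P.part a ≠ {a}) : (P.part a).erase a ∈ (restr ha P).parts := by
  rw [restr_parts_of_ne ha P h]
  exact mem_insert_self _ _

lemma eq_addB (ha : a ∉ t) (P : Finpartition (insert a t)) (h : P.part a ≠ {a}) :
    P = addB (restr ha P) ((P.part a).erase a) (erase_part_mem_restr ha P h) ha := by
  have haT := a_mem_part ha P
  have hTmem := part_a_mem ha P
  have hTe : (P.part a).erase a ∉ P.parts.erase (P.part a) := by
    intro hmem
    have hne : ((P.part a).erase a).Nonempty := by
      rw [Finset.erase_nonempty haT, Finset.nontrivial_iff_ne_singleton haT]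
      exact h
    obtain ⟨x, hx⟩ := hne
    have hx1 : x ∈ P.part a := mem_of_mem_erase hx
    have := P.eq_of_mem_parts (mem_of_mem_erase hmem) hTmem hx hx1
    exact ne_of_mem_erase hmem this
  ext1
  rw [addB_parts, restr_parts_of_ne ha P h, Finset.erase_insert hTe,
    Finset.insert_erase haT, Finset.insert_erase hTmem]

end Bij

section Fiber

variable {α : Type*} [DecidableEq α] {t : Finset α} {a : α}

lemma addS_ne_addB (π : Finpartition t) (b : Finset α) (hb : b ∈ π.parts) (ha : a ∉ t) :
    addS π ha ≠ addB π b hb ha := by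
  intro h
  have h1 := part_addS π ha
  rw [h, part_addB] at h1
  obtain ⟨x, hx⟩ := π.nonempty_of_mem_parts hb
  have hxa : x ≠ a := fun hxa => ha (π.le hb (hxa ▸ hx))
  have : x ∈ ({a} : Finset α) := h1 ▸ mem_insert_of_mem hx
  exact hxa (mem_singleton.1 this)

lemma addB_injective (π : Finpartition t) (ha : a ∉ t) {b b' : Finset α}
    (hb : b ∈ π.parts) (hb' : b' ∈ π.parts)
    (h : addB π b hb ha = addB π b' hb' ha) : b = b' := by
  have h1 := part_addB π b hb ha
  rw [h, part_addB] at h1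
  have hab : a ∉ b := fun h' => ha (π.le hb h')
  have hab' : a ∉ b' := fun h' => ha (π.le hb' h')
  have := congrArg (Finset.erase · a) h1
  simpa [Finset.erase_insert hab', Finset.erase_insert hab] using this.symm

lemma fiber_eq (π : Finpartition t) (ha : a ∉ t) :
    (univ : Finset (Finpartition (insert a t))).filter (restr ha · = π)
      = insert (addS π ha) (π.parts.attach.image fun b => addB π b.1 b.2 ha) := by
  ext P
  simp only [mem_filter, mem_univ, true_and, mem_insert, mem_image, mem_attach, true_and,
    Subtype.exists]
  constructor
  · rintro rfl
    by_cases h : P.part a = {a}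
    · exact Or.inl (eq_addS ha P h)
    · exact Or.inr ⟨_, erase_part_mem_restr ha P h, (eq_addB ha P h).symm⟩
  · rintro (rfl | ⟨b, hb, rfl⟩)
    · exact restr_addS π ha
    · exact restr_addB π b hb ha

lemma step_sum (ha : a ∉ t) (f : ℕ → ℕ) :
    ∑ P : Finpartition (insert a t), f P.parts.card
      = ∑ π : Finpartition t, (f (π.parts.card + 1) + π.parts.card * f π.parts.card) := by
  rw [← Finset.sum_fiberwise_of_maps_to (g := restr ha)
      (fun P _ => mem_univ _) (fun P => f P.parts.card)]
  refine Finset.sum_congr rfl fun π _ => ?_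
  rw [fiber_eq π ha, Finset.sum_insert, Finset.sum_image]
  · rw [card_addS]
    congr 1
    rw [Finset.sum_congr rfl fun b _ => by rw [card_addB], Finset.sum_const, card_attach,
      smul_eq_mul]
  · intro b _ b' _ h
    exact Subtype.ext (addB_injective π ha b.2 b'.2 h)
  · simp only [mem_image, mem_attach, true_and, Subtype.exists]
    rintro ⟨b, hb, h⟩
    exact addS_ne_addB π b hb ha h.symm

end Fiber

lemma stirling2_succ_zero (m : ℕ) : stirling2 (m + 1) 0 = 0 := rfl

lemma stirling2_eq_zero {m k : ℕ} (h : m < k) : stirling2 m k = 0 := by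
  induction m generalizing k with
  | zero => cases k with
    | zero => omega
    | succ k => rfl
  | succ m ih =>
    cases k with
    | zero => omega
    | succ k =>
      show stirling2 m k + (k + 1) * stirling2 m (k + 1) = 0
      rw [ih (by omega), ih (by omega), mul_zero]
      rfl

lemma stirling_step (m : ℕ) (f : ℕ → ℕ) :
    ∑ k ∈ range (m + 1 + 1), stirling2 (m + 1) k * f k
      = ∑ k ∈ range (m + 1), stirling2 m k * (f (k + 1) + k * f k) := by
  rw [Finset.sum_range_succ']
  have e1 : ∀ k ∈ range (m + 1), stirling2 (m + 1) (k + 1) * f (k + 1)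
      = stirling2 m k * f (k + 1) + stirling2 m (k + 1) * ((k + 1) * f (k + 1)) := fun k _ => by
    show (stirling2 m k + (k + 1) * stirling2 m (k + 1)) * f (k + 1) = _
    ring
  rw [Finset.sum_congr rfl e1, Finset.sum_add_distrib]
  have e2 : ∀ k ∈ range (m + 1), stirling2 m k * (f (k + 1) + k * f k)
      = stirling2 m k * f (k + 1) + stirling2 m k * (k * f k) := fun k _ => by ring
  rw [Finset.sum_congr rfl e2, Finset.sum_add_distrib]
  simp only [stirling2_succ_zero, zero_mul, add_zero]
  congr 1
  have h2 : ∑ k ∈ range (m + 2), stirling2 m k * (k * f k)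
      = ∑ k ∈ range (m + 1), stirling2 m (k + 1) * ((k + 1) * f (k + 1)) := by
    rw [Finset.sum_range_succ']
    simp
  have h3 : ∑ k ∈ range (m + 2), stirling2 m k * (k * f k)
      = ∑ k ∈ range (m + 1), stirling2 m k * (k * f k) := by
    rw [Finset.sum_range_succ, stirling2_eq_zero (by omega), zero_mul, add_zero]
  rw [← h2, h3]

lemma main_count {α : Type*} [DecidableEq α] (s : Finset α) :
    ∀ f : ℕ → ℕ, ∑ P : Finpartition s, f P.parts.card
      = ∑ k ∈ range (s.card + 1), stirling2 s.card k * f k := by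
  induction s using Finset.induction_on with
  | empty =>
    intro f
    have huniq : ∀ P : Finpartition (∅ : Finset α), P = ⊥ := fun P =>
      Finpartition.ext (by
        rw [Finpartition.parts_eq_empty_iff.2 Finset.bot_eq_empty.symm]
        rw [Finpartition.parts_eq_empty_iff.2 Finset.bot_eq_empty.symm])
    rw [Fintype.sum_eq_single (⊥ : Finpartition (∅ : Finset α))
      (fun P h => absurd (huniq P) h)]
    rw [Finpartition.parts_eq_empty_iff.2 Finset.bot_eq_empty.symm]
    simp [stirling2]
  | @insert a t ha ih =>
    intro f
    rw [step_sum ha f, ih (fun k => f (k + 1) + k * f k),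
      Finset.card_insert_of_notMem ha, stirling_step]

lemma reindex_Icc (m : ℕ) (g : ℕ → ℕ) :
    ∑ k ∈ Finset.Icc 1 (m + 2), g k = ∑ k ∈ range (m + 2), g (k + 1) := by
  rw [← Finset.Ico_add_one_right_eq_Icc, Finset.sum_Ico_eq_sum_range]
  refine Finset.sum_congr (by norm_num) fun k _ => by rw [Nat.add_comm 1 k]

theorem coefficient_mass (n : ℕ) (hn : 2 ≤ n) :
    (∑ π : Finpartition (Finset.univ : Finset (Fin n)), (π.parts.card - 1).factorial)
      = 2 * ordBell (n - 1) ∧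
    (∑ k ∈ Finset.Icc 1 n, stirling2 n k * (k - 1).factorial) = 2 * ordBell (n - 1) := by
  obtain ⟨m, rfl⟩ : ∃ m, n = m + 2 := ⟨n - 2, by omega⟩
  have hre : ∑ k ∈ Finset.Icc 1 (m + 2), stirling2 (m + 2) k * (k - 1).factorial
      = ∑ k ∈ range (m + 2), stirling2 (m + 2) (k + 1) * k.factorial := by
    rw [reindex_Icc]
    simp
  have hIcc : (∑ k ∈ Finset.Icc 1 (m + 2), stirling2 (m + 2) k * (k - 1).factorial)
      = 2 * ordBell (m + 1) := by
    rw [hre]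
    have key : ∀ k ∈ range (m + 2), stirling2 (m + 2) (k + 1) * k.factorial
        = stirling2 (m + 1) k * k.factorial
          + stirling2 (m + 1) (k + 1) * (k + 1).factorial := fun k _ => by
      show (stirling2 (m + 1) k + (k + 1) * stirling2 (m + 1) (k + 1)) * k.factorial = _
      rw [Nat.factorial_succ]
      ring
    rw [Finset.sum_congr rfl key, Finset.sum_add_distrib]
    have h1 : ∑ k ∈ range (m + 2), stirling2 (m + 1) k * k.factorial = ordBell (m + 1) := rfl
    have h3 : ∑ k ∈ range (m + 2), stirling2 (m + 1) (k + 1) * (k + 1).factorial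
        = ordBell (m + 1) := by
      have h4 : ∑ k ∈ range (m + 3), stirling2 (m + 1) k * k.factorial
          = ∑ k ∈ range (m + 2), stirling2 (m + 1) (k + 1) * (k + 1).factorial := by
        rw [Finset.sum_range_succ']
        simp [stirling2_succ_zero]
      rw [← h4, Finset.sum_range_succ, stirling2_eq_zero (by omega), zero_mul, add_zero, h1]
    rw [h1, h3, two_mul]
  refine ⟨?_, by simpa using hIcc⟩
  have hmc := main_count (Finset.univ : Finset (Fin (m + 2))) (fun k => (k - 1).factorial)
  rw [Finset.card_univ, Fintype.card_fin] at hmc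
  rw [hmc, Finset.sum_range_succ', show m + 2 - 1 = m + 1 from rfl, ← hIcc, hre]
  simp [stirling2_succ_zero]
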